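/- Let k be a field and let α : ℕ → k be a sequence, with associated formal power series Z(T) = ∑_{n≥0} α_n T^n in k[[T]]. Then Z is rational (i.e. there exist polynomials P, Q ∈ k[T] with Q ≠ 0 and Q·Z = P in k[[T]]) if and only if there exist N and M in ℕ such that det(H_{m,N}) = 0 for all m > M, where H_{m,n} denotes the (n+1)×(n+1) Hankel matrix with (i,j) entry α_{m+i+j} for 0 ≤ i,j ≤ n. -/

import Mathlib

open Matrix Finset

namespace KH

variable {k : Type*} [Field k]


variable {k : Type*} [Field k]

/-- The Hankel matrix of size n, starting at m. -/
def hank (α : ℕ → k) (m n : ℕ) : Matrix (Fin n) (Fin n) k :=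
  Matrix.of fun i j => α (m + i + j)

lemma mulVec_eq_zero {n : ℕ} {A : Matrix (Fin n) (Fin n) k} (hA : A.det ≠ 0)
    {x : Fin n → k} (hx : A.mulVec x = 0) : x = 0 := by
  by_contra h
  exact hA (Matrix.exists_mulVec_eq_zero_iff.mp ⟨x, h, hx⟩)

lemma hank_mulVec' {α : ℕ → k} {m n : ℕ} (x : Fin n → k) (i : Fin n) :
    (hank α m n).mulVec x i = ∑ j : Fin n, α (m + i + j) * x j := rfl

/-- Claim A : a vector orthogonal to the first n rows (of the (n+1)-sized Hankel) whose
last entry vanishes is zero, provided the n-sized Hankel at m0 is nonsingular. -/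
lemma claimA {α : ℕ → k} {n m0 : ℕ}
    (hS : (hank α m0 n).det ≠ 0)
    {x : Fin (n + 1) → k}
    (hrow : ∀ i : Fin n, ∑ j : Fin (n + 1), α (m0 + i + j) * x j = 0)
    (hlast : x (Fin.last n) = 0) : x = 0 := by
  have hx' : (hank α m0 n).mulVec (fun j => x j.castSucc) = 0 := by
    funext i
    have h := hrow i
    rw [Fin.sum_univ_castSucc, hlast, mul_zero, add_zero] at h
    rw [hank_mulVec']
    simpa using h
  have h0 := mulVec_eq_zero hS hx'
  funext j
  refine Fin.lastCases hlast (fun j => ?_) j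
  exact congrFun h0 j

/-- Claim A' : a vector orthogonal to rows at base m1 (as i ranges over Fin n) whose
first entry vanishes is zero, provided the n-sized Hankel at m1+1 is nonsingular. -/
lemma claimA' {α : ℕ → k} {n m1 : ℕ}
    (hS : (hank α (m1 + 1) n).det ≠ 0)
    {v : Fin (n + 1) → k}
    (hrow : ∀ i : Fin n, ∑ j : Fin (n + 1), α (m1 + i + j) * v j = 0)
    (h0 : v 0 = 0) : v = 0 := by
  have hx' : (hank α (m1 + 1) n).mulVec (fun j => v j.succ) = 0 := by
    funext i
    have h := hrow i
    rw [Fin.sum_univ_succ, h0, mul_zero, zero_add] at h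
    rw [hank_mulVec']
    have : ∀ j : Fin n, α (m1 + 1 + ↑i + ↑j) = α (m1 + ↑i + ↑(j.succ)) := by
      intro j; congr 1; simp [Fin.val_succ]; omega
    simp only [Pi.zero_apply]
    rw [← h]
    exact Finset.sum_congr rfl fun j _ => by rw [this j]
  have hz := mulVec_eq_zero hS hx'
  funext j
  refine Fin.cases h0 (fun j => ?_) j
  exact congrFun hz j

/-- Claim B : uniqueness up to scalar of vectors orthogonal to the first n rows. -/
lemma claimB {α : ℕ → k} {n m0 : ℕ}
    (hS : (hank α m0 n).det ≠ 0)
    {w y : Fin (n + 1) → k}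
    (hw : ∀ i : Fin n, ∑ j : Fin (n + 1), α (m0 + i + j) * w j = 0)
    (hy : ∀ i : Fin n, ∑ j : Fin (n + 1), α (m0 + i + j) * y j = 0)
    (hwl : w (Fin.last n) ≠ 0) :
    y = (y (Fin.last n) / w (Fin.last n)) • w := by
  have hx : (y - (y (Fin.last n) / w (Fin.last n)) • w) = 0 := by
    apply claimA hS
    · intro i
      have h1 := hw i
      have h2 := hy i
      simp only [Pi.sub_apply, Pi.smul_apply, smul_eq_mul, mul_sub, Finset.sum_sub_distrib]
      rw [h2]
      have : ∑ j : Fin (n+1), α (m0 + ↑i + ↑j) * (y (Fin.last n) / w (Fin.last n) * w j)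
          = (y (Fin.last n) / w (Fin.last n)) * ∑ j : Fin (n+1), α (m0 + ↑i + ↑j) * w j := by
        rw [Finset.mul_sum]; exact Finset.sum_congr rfl fun j _ => by ring
      rw [this, h1, mul_zero, sub_zero]
    · simp only [Pi.sub_apply, Pi.smul_apply, smul_eq_mul]
      field_simp
      simp
  have := sub_eq_zero.mp hx
  exact this

/-- Claim C : a kernel vector of the (n+1)-sized Hankel with nonzero last entry. -/
lemma claimC {α : ℕ → k} {n m0 : ℕ}
    (hB : (hank α m0 (n + 1)).det = 0)
    (hS : (hank α m0 n).det ≠ 0) :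
    ∃ w : Fin (n + 1) → k,
      (∀ i : Fin (n + 1), ∑ j : Fin (n + 1), α (m0 + i + j) * w j = 0) ∧
      w (Fin.last n) ≠ 0 := by
  obtain ⟨w, hw0, hw⟩ := Matrix.exists_mulVec_eq_zero_iff.mpr hB
  have hrow : ∀ i : Fin (n + 1), ∑ j : Fin (n + 1), α (m0 + i + j) * w j = 0 := by
    intro i
    have := congrFun hw i
    rw [hank_mulVec'] at this
    simpa using this
  refine ⟨w, hrow, fun hl => hw0 ?_⟩
  exact claimA hS (fun i => by simpa using hrow i.castSucc) hl


/-- Propagation step. -/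
lemma prop_step {α : ℕ → k} {n m1 : ℕ}
    (hB1 : (hank α m1 (n + 1)).det = 0)
    (hB2 : (hank α (m1 + 1) (n + 1)).det = 0)
    (hS : (hank α (m1 + 1) n).det ≠ 0) :
    (hank α (m1 + 2) n).det ≠ 0 := by
  intro hd
  obtain ⟨d, hd0, hdk⟩ := Matrix.exists_mulVec_eq_zero_iff.mpr hd
  obtain ⟨w, hw, hwl⟩ := claimC hB2 hS
  obtain ⟨v, hv0, hvk⟩ := Matrix.exists_mulVec_eq_zero_iff.mpr hB1
  have hvrow : ∀ i : Fin (n + 1), ∑ j : Fin (n + 1), α (m1 + i + j) * v j = 0 := by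
    intro i
    have := congrFun hvk i
    rw [hank_mulVec'] at this
    simpa using this
  have hvfirst : v 0 ≠ 0 := by
    intro h
    exact hv0 (claimA' hS (fun i => by simpa using hvrow i.castSucc) h)
  -- v satisfies the (m1+1)-rows relations for i : Fin n
  have hvrow' : ∀ i : Fin n, ∑ j : Fin (n + 1), α (m1 + 1 + i + j) * v j = 0 := by
    intro i
    have := hvrow i.succ
    rw [← this]
    refine Finset.sum_congr rfl fun j _ => ?_
    congr 2
    simp [Fin.val_succ]; omega
  have hwrow : ∀ i : Fin n, ∑ j : Fin (n + 1), α (m1 + 1 + i + j) * w j = 0 := by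
    intro i; simpa using hw i.castSucc
  have hveq := claimB hS hwrow hvrow' hwl
  have hwfirst : w 0 ≠ 0 := by
    intro h
    have h1 : v 0 = (v (Fin.last n) / w (Fin.last n)) * w 0 := by
      have := congrFun hveq 0; simpa using this
    rw [h, mul_zero] at h1
    exact hvfirst h1
  -- e : shifted d
  set e : Fin (n + 1) → k := Fin.cons 0 d with he
  have herow : ∀ i : Fin n, ∑ j : Fin (n + 1), α (m1 + 1 + i + j) * e j = 0 := by
    intro i
    rw [Fin.sum_univ_succ]
    have hcons0 : e 0 = 0 := rfl
    rw [hcons0, mul_zero, zero_add]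
    have := congrFun hdk i
    rw [hank_mulVec'] at this
    simp only [Pi.zero_apply] at this
    rw [← this]
    refine Finset.sum_congr rfl fun j _ => ?_
    have : e j.succ = d j := rfl
    rw [this]
    congr 2
    simp [Fin.val_succ]; omega
  have heeq := claimB hS hwrow herow hwl
  have ht : e (Fin.last n) / w (Fin.last n) = 0 := by
    have h1 : e 0 = (e (Fin.last n) / w (Fin.last n)) * w 0 := by
      have := congrFun heeq 0; simpa using this
    have h2 : e 0 = 0 := rfl
    rw [h2] at h1
    rcases mul_eq_zero.mp h1.symm with h | h
    · exact h
    · exact absurd h hwfirst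
  apply hd0
  funext j
  have := congrFun heeq j.succ
  have hej : e j.succ = d j := rfl
  rw [hej, ht] at this
  simpa using this

/-- Iterated propagation. -/
lemma prop_iter {α : ℕ → k} {n m1 : ℕ}
    (hB : ∀ m ≥ m1, (hank α m (n + 1)).det = 0)
    (hS : (hank α (m1 + 1) n).det ≠ 0) :
    ∀ m ≥ m1 + 1, (hank α m n).det ≠ 0 := by
  have key : ∀ r, (hank α (m1 + 1 + r) n).det ≠ 0 := by
    intro r
    induction r with
    | zero => exact hS
    | succ r ih =>
      have h1 := hB (m1 + r) (by omega)
      have h2 := hB (m1 + r + 1) (by omega)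
      have ih' : (hank α (m1 + r + 1) n).det ≠ 0 := by
        have : m1 + 1 + r = m1 + r + 1 := by omega
        rwa [this] at ih
      have := prop_step h1 h2 ih'
      have he : m1 + r + 2 = m1 + 1 + (r + 1) := by omega
      rwa [he] at this
  intro m hm
  have : m = m1 + 1 + (m - (m1 + 1)) := by omega
  rw [this]
  exact key _

/-- Relation from a kernel vector with nonzero last entry. -/
lemma rel_of_kernel {α : ℕ → k} {n m' : ℕ} {w : Fin (n + 1) → k}
    (hw : ∀ i : Fin (n + 1), ∑ j : Fin (n + 1), α (m' + i + j) * w j = 0)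
    (hwl : w (Fin.last n) ≠ 0) (i : Fin (n + 1)) :
    α (m' + i + n) = ∑ j : Fin n, (-(w j.castSucc / w (Fin.last n))) * α (m' + i + j) := by
  have h := hw i
  rw [Fin.sum_univ_castSucc] at h
  simp only [Fin.coe_castSucc, Fin.val_last] at h
  have hs : ∑ j : Fin n, (-(w j.castSucc / w (Fin.last n))) * α (m' + i + j)
      = (-(∑ j : Fin n, α (m' + ↑i + ↑j) * w j.castSucc)) / w (Fin.last n) := by
    rw [← Finset.sum_neg_distrib, Finset.sum_div]
    refine Finset.sum_congr rfl fun j _ => ?_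
    rw [neg_div, neg_mul, neg_inj, mul_comm, mul_div_assoc]
  rw [hs, eq_div_iff hwl]
  linear_combination h

/-- Extraction of a single linear recurrence. -/
lemma extract {α : ℕ → k} {n m0 : ℕ}
    (hB : ∀ m ≥ m0, (hank α m (n + 1)).det = 0)
    (hS : ∀ m ≥ m0, (hank α m n).det ≠ 0) :
    ∃ c : Fin n → k, ∀ m ≥ m0, α (m + n) = ∑ i, c i * α (m + i) := by
  obtain ⟨w, hw, hwl⟩ := claimC (hB m0 le_rfl) (hS m0 le_rfl)
  set c : Fin n → k := fun j => -(w j.castSucc / w (Fin.last n)) with hc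
  refine ⟨c, ?_⟩
  intro m
  induction m using Nat.strong_induction_on with
  | _ m IH =>
  intro hm
  by_cases hcase : m ≤ m0 + n
  · -- base: m = m0 + i with i ≤ n
    obtain ⟨i, rfl⟩ : ∃ i : Fin (n + 1), m = m0 + ↑i :=
      ⟨⟨m - m0, by omega⟩, by simp; omega⟩
    exact rel_of_kernel hw hwl i
  · -- step
    obtain ⟨m2, hm2, rfl⟩ : ∃ m2, m2 ≥ m0 + 1 ∧ m = m2 + n :=
      ⟨m - n, by omega, by omega⟩
    obtain ⟨w', hw', hwl'⟩ := claimC (hB m2 (by omega)) (hS m2 (by omega))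
    set c' : Fin n → k := fun j => -(w' j.castSucc / w' (Fin.last n)) with hc'
    have hrel' : ∀ i : Fin (n + 1), α (m2 + ↑i + n) = ∑ j : Fin n, c' j * α (m2 + ↑i + ↑j) :=
      rel_of_kernel hw' hwl'
    have hcc : c' = c := by
      have hsub : (hank α m2 n).mulVec (c' - c) = 0 := by
        funext i
        rw [Matrix.mulVec_sub]
        have h1 : (hank α m2 n).mulVec c' i = α (m2 + ↑i + n) := by
          rw [hank_mulVec']
          have h := hrel' i.castSucc
          simp only [Fin.coe_castSucc] at h
          rw [h]
          exact Finset.sum_congr rfl fun j _ => by ring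
        have h2 : (hank α m2 n).mulVec c i = α (m2 + ↑i + n) := by
          rw [hank_mulVec']
          have hIH := IH (m2 + ↑i) (by omega) (by omega)
          rw [hIH]
          exact Finset.sum_congr rfl fun j _ => by ring
        simp [h1, h2]
      have := mulVec_eq_zero (hS m2 (by omega)) hsub
      exact sub_eq_zero.mp this
    have := hrel' (Fin.last n)
    rw [hcc] at this
    simp only [Fin.val_last] at this
    exact this

/-- A sequence satisfying a linear recurrence has rational power series. -/
lemma rational_of_rec {α : ℕ → k} {n S : ℕ} (c : Fin n → k)
    (h : ∀ m ≥ S, α (m + n) = ∑ i, c i * α (m + i)) :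
    ∃ P Q : Polynomial k, Q ≠ 0 ∧
      (Q : PowerSeries k) * PowerSeries.mk α = (P : PowerSeries k) := by
  set Q : Polynomial k := 1 - ∑ i : Fin n, Polynomial.C (c i) * Polynomial.X ^ (n - (i : ℕ))
    with hQ
  have hQ0 : Q.coeff 0 = 1 := by
    rw [hQ]
    rw [Polynomial.coeff_sub, Polynomial.coeff_one]
    rw [Polynomial.finset_sum_coeff]
    have : ∀ i : Fin n, (Polynomial.C (c i) * Polynomial.X ^ (n - (i : ℕ))).coeff 0 = 0 := by
      intro i
      rw [Polynomial.coeff_C_mul, Polynomial.coeff_X_pow]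
      have : ¬ (0 = n - (i : ℕ)) := by have := i.isLt; omega
      simp [this]
    rw [Finset.sum_congr rfl fun i _ => this i]
    simp
  have hQne : Q ≠ 0 := fun hz => by simp [hz] at hQ0
  set Z : PowerSeries k := PowerSeries.mk α with hZ
  have hcoeff : ∀ s, S + n ≤ s → PowerSeries.coeff s ((Q : PowerSeries k) * Z) = 0 := by
    intro s hs
    obtain ⟨m, hm, rfl⟩ : ∃ m, S ≤ m ∧ s = m + n := ⟨s - n, by omega, by omega⟩
    have hcast : (Q : PowerSeries k) =
        1 - ∑ i : Fin n, PowerSeries.C (c i) * PowerSeries.X ^ (n - (i : ℕ)) := by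
      rw [hQ, Polynomial.coe_sub, Polynomial.coe_one]
      congr 1
      rw [← Polynomial.coeToPowerSeries.ringHom_apply, map_sum]
      refine Finset.sum_congr rfl fun i _ => ?_
      rw [Polynomial.coeToPowerSeries.ringHom_apply, Polynomial.coe_mul, Polynomial.coe_pow,
        Polynomial.coe_C, Polynomial.coe_X]
    rw [hcast, sub_mul, one_mul, Finset.sum_mul, map_sub, map_sum]
    have hterm : ∀ i : Fin n,
        PowerSeries.coeff (m + n) (PowerSeries.C (c i) * PowerSeries.X ^ (n - (i : ℕ)) * Z)
        = c i * α (m + i) := by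
      intro i
      rw [mul_assoc, PowerSeries.coeff_C_mul]
      have hidx : m + n = (m + (i : ℕ)) + (n - (i : ℕ)) := by have := i.isLt; omega
      rw [hidx, PowerSeries.coeff_X_pow_mul]
      rw [hZ, PowerSeries.coeff_mk]
    rw [Finset.sum_congr rfl fun i _ => hterm i]
    rw [hZ, PowerSeries.coeff_mk, h m hm]
    exact sub_self _
  refine ⟨PowerSeries.trunc (S + n) ((Q : PowerSeries k) * Z), Q, hQne, ?_⟩
  ext s
  rw [Polynomial.coeff_coe, PowerSeries.coeff_trunc]
  by_cases hs : s < S + n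
  · simp [hs]
  · simp only [hs, if_false]
    exact hcoeff s (by omega)

/-- Descent: eventually-vanishing Hankel determinants give a linear recurrence. -/
lemma rec_of_hankel (α : ℕ → k) :
    ∀ N : ℕ, (∃ M, ∀ m > M, (hank α m (N + 1)).det = 0) →
    ∃ n S : ℕ, ∃ c : Fin n → k, ∀ m ≥ S, α (m + n) = ∑ i, c i * α (m + i) := by
  intro N
  induction N using Nat.strong_induction_on with
  | _ N IH =>
  rintro ⟨M, hM⟩
  match N, IH, hM with
  | 0, _, hM =>
    refine ⟨0, M + 1, 0, ?_⟩
    intro m hm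
    have := hM m (by omega)
    rw [Matrix.det_fin_one] at this
    simpa [hank] using this
  | N' + 1, IH, hM =>
    by_cases hprev : ∃ M', ∀ m > M', (hank α m (N' + 1)).det = 0
    · exact IH N' (by omega) hprev
    · push_neg at hprev
      obtain ⟨m0, hm0gt, hm0ne⟩ := hprev (M + 1)
      obtain ⟨m1, rfl⟩ : ∃ m1, m0 = m1 + 1 := ⟨m0 - 1, by omega⟩
      have hB : ∀ m ≥ m1, (hank α m (N' + 1 + 1)).det = 0 := by
        intro m hm
        exact hM m (by omega)
      have hSall := prop_iter hB hm0ne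
      obtain ⟨c, hc⟩ := extract (n := N' + 1) (m0 := m1 + 1)
        (fun m hm => hB m (by omega)) hSall
      exact ⟨N' + 1, m1 + 1, c, hc⟩

/-- Forward direction: rationality implies eventually vanishing Hankel determinants. -/
lemma hankel_of_rational {α : ℕ → k} {P Q : Polynomial k} (hQ : Q ≠ 0)
    (h : (Q : PowerSeries k) * PowerSeries.mk α = (P : PowerSeries k)) :
    ∀ m > P.natDegree, (hank α m (Q.natDegree + 1)).det = 0 := by
  intro m hm
  set N := Q.natDegree with hN
  rw [← Matrix.exists_mulVec_eq_zero_iff]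
  refine ⟨fun j : Fin (N + 1) => Q.coeff (N - (j : ℕ)), ?_, ?_⟩
  · intro hzero
    have h0 : Q.coeff N = 0 := by
      have := congrFun hzero 0
      simpa using this
    exact (Polynomial.leadingCoeff_ne_zero.mpr hQ) h0
  · funext i
    show (∑ j : Fin (N + 1), α (m + i + j) * Q.coeff (N - (j : ℕ))) = 0
    have key : ∑ j : Fin (N + 1), α (m + i + j) * Q.coeff (N - (j : ℕ))
        = PowerSeries.coeff (m + i + N) ((Q : PowerSeries k) * PowerSeries.mk α) := by
      rw [PowerSeries.coeff_mul, Finset.Nat.sum_antidiagonal_eq_sum_range_succ_mk]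
      have hsplit : ∑ l ∈ range (m + ↑i + N + 1),
          PowerSeries.coeff l (Q : PowerSeries k) *
            PowerSeries.coeff (m + ↑i + N - l) (PowerSeries.mk α)
          = ∑ l ∈ range (N + 1), Q.coeff l * α (m + ↑i + N - l) := by
        rw [Finset.sum_congr rfl (fun l _ => by
          rw [Polynomial.coeff_coe, PowerSeries.coeff_mk])]
        symm
        apply Finset.sum_subset
        · intro l hl
          simp only [Finset.mem_range] at *
          omega
        · intro l _ hl
          simp only [Finset.mem_range, not_lt] at hl
          rw [Polynomial.coeff_eq_zero_of_natDegree_lt (by omega), zero_mul]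
      rw [hsplit]
      rw [Fin.sum_univ_eq_sum_range (fun j => α (m + ↑i + j) * Q.coeff (N - j)) (N + 1)]
      rw [← Finset.sum_range_reflect (fun l => Q.coeff l * α (m + ↑i + N - l)) (N + 1)]
      refine Finset.sum_congr rfl fun j hj => ?_
      simp only [Finset.mem_range] at hj
      have h1 : N + 1 - 1 - j = N - j := by omega
      have h2 : m + ↑i + N - (N - j) = m + ↑i + j := by omega
      rw [h1, h2, mul_comm]
    rw [key, h, Polynomial.coeff_coe]
    exact Polynomial.coeff_eq_zero_of_natDegree_lt (by omega)


end KH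

/-- **Kronecker rationality criterion via Hankel determinants.**
Let `k` be a field, `α : ℕ → k`, with power series `Z(T) = ∑ αₙ Tⁿ`.  Then `Z` is
rational (i.e. `Q · Z = P` for polynomials `P, Q` with `Q ≠ 0`) if and only if
there exist `N` and `M` such that `det H_{m,N} = 0` for all `m > M`, where
`H_{m,n}` is the `(n+1) × (n+1)` Hankel matrix with `(i,j)` entry `α_{m+i+j}`. -/
theorem rational_iff_hankel_det_eventually_zero
    {k : Type*} [Field k] (α : ℕ → k) :
    (∃ P Q : Polynomial k, Q ≠ 0 ∧
        (Q : PowerSeries k) * PowerSeries.mk α = (P : PowerSeries k)) ↔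
    (∃ N M : ℕ, ∀ m > M,
        (Matrix.of fun i j : Fin (N + 1) => α (m + i + j)).det = 0) := by
  constructor
  · rintro ⟨P, Q, hQ, h⟩
    exact ⟨Q.natDegree, P.natDegree, KH.hankel_of_rational hQ h⟩
  · rintro ⟨N, M, h⟩
    obtain ⟨n, S, c, hc⟩ := KH.rec_of_hankel α N ⟨M, h⟩
    exact KH.rational_of_rec c hc
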